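/- arXiv:2506.01791 — 3 statements merged into one kernel-verified Lean document; each statement's English description precedes it below -/
import Mathlib

section
/- Let f₁, f₂ : ℝ^d → ℝ be differentiable with curvatures in [μ₁, L₁] and [μ₂, L₂] (μ₁ < L₁, μ₂ < L₂), and let xₖ, xₖ₊₁ satisfy ∇f₁(xₖ₊₁) = ∇f₂(xₖ). With Δx = xₖ − xₖ₊₁ and Gᵏ = ∇f₁(xₖ) − ∇f₂(xₖ), it holds that ⟨Gᵏ, Δx⟩ ≥ μ₁‖Δx‖² + ‖Gᵏ − μ₁Δx‖²/(L₁−μ₁). -/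
open Set
open scoped RealInnerProductSpace

variable {E : Type*} [NormedAddCommGroup E] [InnerProductSpace ℝ E] [CompleteSpace E]

lemma inner_grad_aux (f : E → ℝ) (x v : E) (hf : DifferentiableAt ℝ f x) :
    ⟪gradient f x, v⟫ = fderiv ℝ f x v := by
  have h := hf.hasGradientAt.hasFDerivAt
  rw [h.fderiv, InnerProductSpace.toDual_apply_apply]

lemma grad_ineq_aux (f : E → ℝ) (hf : Differentiable ℝ f) (hc : ConvexOn ℝ univ f) (x y : E) :
    f x + ⟪gradient f x, y - x⟫ ≤ f y := by
  set φ : ℝ → ℝ := fun t => f (x + t • (y - x)) with hφ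
  have hline : ∀ t : ℝ, HasDerivAt (fun s : ℝ => x + s • (y - x)) (y - x) t := fun t => by
    simpa using ((hasDerivAt_id t).smul_const (y - x)).const_add x
  have hD : HasDerivAt φ (fderiv ℝ f x (y - x)) 0 := by
    have := (hf (x + (0:ℝ) • (y - x))).hasFDerivAt.comp_hasDerivAt 0 (hline 0)
    simpa [hφ, Function.comp_def] using this
  have hconv : ConvexOn ℝ univ φ := by
    refine ⟨convex_univ, fun p _ q _ a b ha hb hab => ?_⟩
    have hpt : x + (a • p + b • q) • (y - x)
        = a • (x + p • (y - x)) + b • (x + q • (y - x)) := by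
      match_scalars <;> simp <;> ring_nf <;> nlinarith [hab]
    simp only [hφ, smul_eq_mul]
    calc f (x + (a * p + b * q) • (y - x))
        = f (a • (x + p • (y - x)) + b • (x + q • (y - x))) := by
          rw [← hpt]; norm_num
      _ ≤ a * f (x + p • (y - x)) + b * f (x + q • (y - x)) :=
          hc.2 (mem_univ _) (mem_univ _) ha hb hab
  have hs := hconv.le_slope_of_hasDerivAt (mem_univ 0) (mem_univ 1) one_pos hD
  rw [slope_def_field] at hs
  simp [hφ] at hs
  rw [inner_grad_aux f x (y - x) (hf x)]
  have hmap : (fderiv ℝ f x) (y - x) = (fderiv ℝ f x) y - (fderiv ℝ f x) x := map_sub _ _ _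
  linarith

lemma hasGradientAt_half_normSq_aux (c : ℝ) (x : E) :
    HasGradientAt (fun y : E => c / 2 * ‖y‖ ^ 2) (c • x) x := by
  rw [hasGradientAt_iff_hasFDerivAt]
  have h := (hasFDerivAt_id x).norm_sq
  have h2 := h.const_mul (c / 2)
  convert h2 using 1
  · rfl
  · rfl
  ext v
  simp [InnerProductSpace.toDual_apply_apply, real_inner_smul_left]
  ring

lemma grad_sub_sq_aux (f : E → ℝ) (c : ℝ) (x : E) (hf : DifferentiableAt ℝ f x) :
    HasGradientAt (fun y => f y - c / 2 * ‖y‖ ^ 2) (gradient f x - c • x) x := by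
  rw [hasGradientAt_iff_hasFDerivAt]
  have h1 := hf.hasGradientAt.hasFDerivAt
  have h2 := (hasGradientAt_half_normSq_aux c x).hasFDerivAt
  have := h1.sub h2
  convert this using 1
  · rfl
  · rfl
  · rfl
  simp

lemma grad_sq_sub_aux (f : E → ℝ) (c : ℝ) (x : E) (hf : DifferentiableAt ℝ f x) :
    HasGradientAt (fun y => c / 2 * ‖y‖ ^ 2 - f y) (c • x - gradient f x) x := by
  rw [hasGradientAt_iff_hasFDerivAt]
  have h1 := hf.hasGradientAt.hasFDerivAt
  have h2 := (hasGradientAt_half_normSq_aux c x).hasFDerivAt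
  have := h2.sub h1
  convert this using 1
  · rfl
  · rfl
  · rfl
  simp

lemma upper_aux (g : E → ℝ) (hg : Differentiable ℝ g) (c : ℝ)
    (hs : ConvexOn ℝ univ (fun y => c / 2 * ‖y‖ ^ 2 - g y)) (x y : E) :
    g y ≤ g x + ⟪gradient g x, y - x⟫ + c / 2 * ‖y - x‖ ^ 2 := by
  have hq : Differentiable ℝ (fun y => c / 2 * ‖y‖ ^ 2 - g y) :=
    fun z => (grad_sq_sub_aux g c z (hg z)).differentiableAt
  have hgrad : gradient (fun y => c / 2 * ‖y‖ ^ 2 - g y) x = c • x - gradient g x :=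
    (grad_sq_sub_aux g c x (hg x)).gradient
  have h := grad_ineq_aux _ hq hs x y
  rw [hgrad] at h
  have e1 : ⟪c • x - gradient g x, y - x⟫
      = c * ⟪x, y⟫ - c * ‖x‖ ^ 2 - ⟪gradient g x, y - x⟫ := by
    simp only [inner_sub_left, inner_sub_right, real_inner_smul_left,
      real_inner_self_eq_norm_sq]
    ring
  have e2 : ‖y - x‖ ^ 2 = ‖y‖ ^ 2 - 2 * ⟪x, y⟫ + ‖x‖ ^ 2 := by
    rw [norm_sub_sq_real, real_inner_comm]
  rw [e1] at h
  rw [e2]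
  linarith

lemma lower_aux (g : E → ℝ) (hg : Differentiable ℝ g) (hconv : ConvexOn ℝ univ g)
    (c : ℝ) (hc : 0 < c)
    (hs : ConvexOn ℝ univ (fun y => c / 2 * ‖y‖ ^ 2 - g y)) (x y : E) :
    g x + ⟪gradient g x, y - x⟫ + ‖gradient g y - gradient g x‖ ^ 2 / (2 * c) ≤ g y := by
  set w := gradient g y - gradient g x with hw
  set z := y - c⁻¹ • w with hz
  have A := grad_ineq_aux g hg hconv x z
  have B := upper_aux g hg c hs y z
  have hzy : z - y = -(c⁻¹ • w) := by rw [hz]; abel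
  have e1 : ⟪gradient g x, z - x⟫ = ⟪gradient g x, y - x⟫ - c⁻¹ * ⟪gradient g x, w⟫ := by
    have hzx : z - x = (y - x) - c⁻¹ • w := by rw [hz]; abel
    rw [hzx, inner_sub_right, real_inner_smul_right]
  have e2 : ⟪gradient g y, z - y⟫ = -(c⁻¹ * ⟪gradient g y, w⟫) := by
    rw [hzy, inner_neg_right, real_inner_smul_right]
  have e3 : ‖z - y‖ ^ 2 = c⁻¹ ^ 2 * ‖w‖ ^ 2 := by
    rw [hzy, norm_neg, norm_smul, mul_pow]
    congr 1
    rw [Real.norm_eq_abs, abs_of_pos (inv_pos.mpr hc)]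
  have e4 : ⟪gradient g y, w⟫ - ⟪gradient g x, w⟫ = ‖w‖ ^ 2 := by
    rw [← inner_sub_left, ← hw, real_inner_self_eq_norm_sq]
  have hcne : c ≠ 0 := ne_of_gt hc
  rw [e1] at A
  rw [e2, e3] at B
  have hc2 : c / 2 * (c⁻¹ ^ 2 * ‖w‖ ^ 2) = ‖w‖ ^ 2 / (2 * c) := by
    field_simp
  have h6 : c⁻¹ * ⟪gradient g y, w⟫ - c⁻¹ * ⟪gradient g x, w⟫ = ‖w‖ ^ 2 / c := by
    rw [← mul_sub, e4]; field_simp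
  have h7 : ‖w‖ ^ 2 / c - ‖w‖ ^ 2 / (2 * c) = ‖w‖ ^ 2 / (2 * c) := by
    field_simp; ring
  linarith

lemma coco_aux (g : E → ℝ) (hg : Differentiable ℝ g) (hconv : ConvexOn ℝ univ g)
    (c : ℝ) (hc : 0 < c)
    (hs : ConvexOn ℝ univ (fun y => c / 2 * ‖y‖ ^ 2 - g y)) (x y : E) :
    ‖gradient g x - gradient g y‖ ^ 2 / c ≤ ⟪gradient g x - gradient g y, x - y⟫ := by
  have A := lower_aux g hg hconv c hc hs x y
  have B := lower_aux g hg hconv c hc hs y x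
  have e : ⟪gradient g x, y - x⟫ + ⟪gradient g y, x - y⟫
      = -⟪gradient g x - gradient g y, x - y⟫ := by
    rw [inner_sub_left, show (y - x) = -(x - y) by abel, inner_neg_right]; ring
  have e3 : ‖gradient g y - gradient g x‖ ^ 2 = ‖gradient g x - gradient g y‖ ^ 2 := by
    rw [norm_sub_rev]
  have h7 : ‖gradient g x - gradient g y‖ ^ 2 / (2 * c)
      + ‖gradient g x - gradient g y‖ ^ 2 / (2 * c)
      = ‖gradient g x - gradient g y‖ ^ 2 / c := by
    field_simp; ring
  have e3' : ‖gradient g y - gradient g x‖ ^ 2 / (2 * c)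
      = ‖gradient g x - gradient g y‖ ^ 2 / (2 * c) := by rw [norm_sub_rev]
  linarith

theorem stmt_2 {d : ℕ} (f₁ f₂ : EuclideanSpace ℝ (Fin d) → ℝ) (μ₁ L₁ μ₂ L₂ : ℝ)
    (hf₁ : Differentiable ℝ f₁) (hf₂ : Differentiable ℝ f₂)
    (h₁ : μ₁ < L₁) (h₂ : μ₂ < L₂)
    (hL₁ : ConvexOn ℝ univ (fun x => L₁ / 2 * ‖x‖ ^ 2 - f₁ x))
    (hμ₁ : ConvexOn ℝ univ (fun x => f₁ x - μ₁ / 2 * ‖x‖ ^ 2))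
    (hL₂ : ConvexOn ℝ univ (fun x => L₂ / 2 * ‖x‖ ^ 2 - f₂ x))
    (hμ₂ : ConvexOn ℝ univ (fun x => f₂ x - μ₂ / 2 * ‖x‖ ^ 2))
    (xk xk1 : EuclideanSpace ℝ (Fin d))
    (hDCA : gradient f₁ xk1 = gradient f₂ xk) :
    ⟪gradient f₁ xk - gradient f₂ xk, xk - xk1⟫ ≥
      μ₁ * ‖xk - xk1‖ ^ 2 +
      ‖(gradient f₁ xk - gradient f₂ xk) - μ₁ • (xk - xk1)‖ ^ 2 / (L₁ - μ₁) := by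
  set g : EuclideanSpace ℝ (Fin d) → ℝ := fun x => f₁ x - μ₁ / 2 * ‖x‖ ^ 2 with hgdef
  have hgd : Differentiable ℝ g := fun z => (grad_sub_sq_aux f₁ μ₁ z (hf₁ z)).differentiableAt
  have hgrad : ∀ z, gradient g z = gradient f₁ z - μ₁ • z :=
    fun z => (grad_sub_sq_aux f₁ μ₁ z (hf₁ z)).gradient
  have hsm : ConvexOn ℝ univ (fun x => (L₁ - μ₁) / 2 * ‖x‖ ^ 2 - g x) := by
    have heq : (fun x : EuclideanSpace ℝ (Fin d) => (L₁ - μ₁) / 2 * ‖x‖ ^ 2 - g x)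
        = (fun x => L₁ / 2 * ‖x‖ ^ 2 - f₁ x) := by
      funext z; simp only [hgdef]; ring
    rw [heq]; exact hL₁
  have hcpos : (0 : ℝ) < L₁ - μ₁ := sub_pos.mpr h₁
  have hco := coco_aux g hgd hμ₁ (L₁ - μ₁) hcpos hsm xk xk1
  have hu : gradient g xk - gradient g xk1
      = (gradient f₁ xk - gradient f₂ xk) - μ₁ • (xk - xk1) := by
    rw [hgrad, hgrad, ← hDCA, smul_sub]; abel
  rw [hu] at hco
  have e : ⟪(gradient f₁ xk - gradient f₂ xk) - μ₁ • (xk - xk1), xk - xk1⟫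
      = ⟪gradient f₁ xk - gradient f₂ xk, xk - xk1⟫ - μ₁ * ‖xk - xk1‖ ^ 2 := by
    rw [inner_sub_left, real_inner_smul_left, real_inner_self_eq_norm_sq]
  rw [ge_iff_le]
  linarith
end

section
/- Let f₁, f₂ : ℝ^d → ℝ be differentiable with curvatures in [μ₁, L₁] and [μ₂, L₂] respectively, where L₂ > μ₁ ≥ μ₂ ≥ 0 and μ₁ < L₁. Let x₀, x₁, x₂ satisfy the DCA conditions ∇f₁(x₁) = ∇f₂(x₀) and ∇f₁(x₂) = ∇f₂(x₁). Then F(x₀) − F(x₁) ≥ (μ₁ + μ₂(L₂−μ₁)/(L₂−μ₂))·(1/2)‖x₀ − x₁‖² + μ₁(μ₁−μ₂)/(L₂−μ₂)·(1/2)‖x₁ − x₂‖², where F = f₁ − f₂. -/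
open Set
open scoped RealInnerProductSpace

variable {E : Type*} [NormedAddCommGroup E] [InnerProductSpace ℝ E] [CompleteSpace E]

/-- The gradient inequality for a differentiable convex function. -/
lemma my_convex_grad {f : E → ℝ} (hf : Differentiable ℝ f)
    (hc : ConvexOn ℝ univ f) (x y : E) :
    f y + ⟪gradient f y, x - y⟫ ≤ f x := by
  set v := x - y with hv
  set φ : ℝ → ℝ := fun t => f (t • v + y) with hφ
  have hφd : ∀ t : ℝ, HasDerivAt φ (fderiv ℝ f (t • v + y) v) t := by
    intro t
    have h1 : HasDerivAt (fun t : ℝ => t • v + y) ((1:ℝ) • v) t :=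
      ((hasDerivAt_id t).smul_const v).add_const y
    have := (hf (t • v + y)).hasFDerivAt.comp_hasDerivAt t h1
    simp only [one_smul] at this
    exact this
  have hφc : ConvexOn ℝ univ φ := by
    have := hc.comp_affineMap (AffineMap.lineMap y x : ℝ →ᵃ[ℝ] E)
    simp only [preimage_univ] at this
    have e : φ = f ∘ ⇑(AffineMap.lineMap y x : ℝ →ᵃ[ℝ] E) := by
      funext t; simp [hφ, hv, AffineMap.lineMap_apply]
    rw [e]; exact this

  have key := hφc.le_slope_of_hasDerivAt (mem_univ (0:ℝ)) (mem_univ (1:ℝ)) one_pos (hφd 0)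
  have hgrad : fderiv ℝ f ((0:ℝ) • v + y) v = ⟪gradient f y, v⟫ := by
    simp only [zero_smul, zero_add]
    rw [gradient, InnerProductSpace.toDual_symm_apply]
  rw [hgrad] at key
  have hs : slope φ 0 1 = f x - f y := by
    rw [slope_def_field]
    simp [hφ, hv]
  rw [hs] at key
  linarith

lemma my_quad_grad (c : ℝ) (p : E) : HasGradientAt (fun x : E => c / 2 * ‖x‖ ^ 2) (c • p) p := by
  have h1 := ((hasFDerivAt_id p).inner ℝ (hasFDerivAt_id p)).const_mul (c / 2)
  have heq : (fun x : E => c / 2 * ‖x‖ ^ 2) = fun x : E => c / 2 * ⟪x, x⟫ := by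
    funext x; rw [real_inner_self_eq_norm_sq]
  rw [hasGradientAt_iff_hasFDerivAt, heq]
  refine h1.congr_fderiv ?_
  ext v
  simp [InnerProductSpace.toDual_apply_apply, fderivInnerCLM_apply, real_inner_smul_left,
    real_inner_comm]
  ring

lemma my_grad_sub_quad {f : E → ℝ} (hf : Differentiable ℝ f) (c : ℝ) (p : E) :
    gradient (fun x => f x - c / 2 * ‖x‖ ^ 2) p = gradient f p - c • p := by
  have h1 : HasGradientAt f (gradient f p) p := (hf p).hasGradientAt
  have h2 := my_quad_grad c p
  have h3 : HasGradientAt (fun x => f x - c / 2 * ‖x‖ ^ 2) (gradient f p - c • p) p := by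
    rw [hasGradientAt_iff_hasFDerivAt, map_sub]
    exact h1.hasFDerivAt.sub h2.hasFDerivAt
  exact h3.gradient

lemma my_diff_quad (c : ℝ) : Differentiable ℝ (fun x : E => c / 2 * ‖x‖ ^ 2) :=
  fun p => (my_quad_grad c p).differentiableAt

/-- Strong convexity lower bound. -/
lemma my_strong_ineq {f : E → ℝ} (hf : Differentiable ℝ f) {c : ℝ}
    (hc : ConvexOn ℝ univ (fun x => f x - c / 2 * ‖x‖ ^ 2)) (x y : E) :
    f y + ⟪gradient f y, x - y⟫ + c / 2 * ‖x - y‖ ^ 2 ≤ f x := by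
  have hd : Differentiable ℝ (fun x : E => f x - c / 2 * ‖x‖ ^ 2) := hf.sub (my_diff_quad c)
  have key := my_convex_grad hd hc x y
  rw [my_grad_sub_quad hf c y, inner_sub_left, real_inner_smul_left] at key
  have hnorm : ‖x - y‖ ^ 2 = ‖x‖ ^ 2 - 2 * ⟪y, x⟫ + ‖y‖ ^ 2 := by
    rw [@norm_sub_sq_real E _ _ x y, real_inner_comm]
  have hinner : ⟪y, x - y⟫ = ⟪y, x⟫ - ‖y‖ ^ 2 := by
    rw [inner_sub_right, real_inner_self_eq_norm_sq]
  have h2 : c / 2 * ‖x - y‖ ^ 2 = c / 2 * ‖x‖ ^ 2 - c * ⟪y, x⟫ + c / 2 * ‖y‖ ^ 2 := by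
    rw [hnorm]; ring
  have h3 : c * ⟪y, x - y⟫ = c * ⟪y, x⟫ - c * ‖y‖ ^ 2 := by
    rw [hinner]; ring
  linarith [key, h2, h3]

lemma my_grad_neg {f : E → ℝ} (hf : Differentiable ℝ f) (p : E) :
    gradient (fun x => -f x) p = -gradient f p := by
  have h : HasGradientAt (fun x => -f x) (-gradient f p) p := by
    rw [hasGradientAt_iff_hasFDerivAt, map_neg]
    exact ((hf p).hasGradientAt.hasFDerivAt).neg
  exact h.gradient

/-- Smoothness upper bound. -/
lemma my_smooth_ineq {f : E → ℝ} (hf : Differentiable ℝ f) {L : ℝ}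
    (hc : ConvexOn ℝ univ (fun x => L / 2 * ‖x‖ ^ 2 - f x)) (x y : E) :
    f x ≤ f y + ⟪gradient f y, x - y⟫ + L / 2 * ‖x - y‖ ^ 2 := by
  have hc' : ConvexOn ℝ univ (fun x => (fun z => -f z) x - (-L) / 2 * ‖x‖ ^ 2) := by
    convert hc using 1
    funext z; ring
  have key := my_strong_ineq (hf.neg) hc' x y
  rw [show gradient (-f) y = -gradient f y from my_grad_neg hf y, inner_neg_left] at key
  simp only [Pi.neg_apply] at key
  linarith

/-- Interpolation inequality for a convex `L`-smooth function. -/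
lemma my_interp {h : E → ℝ} (hd : Differentiable ℝ h) {L : ℝ} (hL : 0 < L)
    (hcv : ConvexOn ℝ univ h) (hsm : ConvexOn ℝ univ (fun x => L / 2 * ‖x‖ ^ 2 - h x))
    (x y : E) :
    h x + ⟪gradient h x, y - x⟫ + 1 / (2 * L) * ‖gradient h y - gradient h x‖ ^ 2 ≤ h y := by
  set w := gradient h y - gradient h x with hw
  set z := y - (1 / L) • w with hz
  have h1 := my_convex_grad hd hcv z x
  have h2 := my_smooth_ineq hd hsm z y
  have e1 : z - y = -((1 / L) • w) := by rw [hz]; abel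
  have e2 : ⟪gradient h y, z - y⟫ = -((1 / L) * ⟪gradient h y, w⟫) := by
    rw [e1, inner_neg_right, real_inner_smul_right]
  have e3 : ‖z - y‖ ^ 2 = (1 / L) ^ 2 * ‖w‖ ^ 2 := by
    rw [e1, norm_neg, norm_smul, mul_pow, Real.norm_eq_abs, sq_abs]
  have e4 : ⟪gradient h x, z - x⟫ = ⟪gradient h x, y - x⟫ - (1 / L) * ⟪gradient h x, w⟫ := by
    have : z - x = (y - x) - (1 / L) • w := by rw [hz]; abel
    rw [this, inner_sub_right, real_inner_smul_right]
  have e5 : (1 / L) * ⟪gradient h y, w⟫ - (1 / L) * ⟪gradient h x, w⟫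
      = (1 / L) * ‖w‖ ^ 2 := by
    rw [← mul_sub, ← inner_sub_left, ← hw, real_inner_self_eq_norm_sq]
  have e7 : (1 / L) * ‖w‖ ^ 2 - L / 2 * ((1 / L) ^ 2 * ‖w‖ ^ 2) = 1 / (2 * L) * ‖w‖ ^ 2 := by
    field_simp; ring
  rw [e4] at h1
  rw [e2, e3] at h2
  linarith [h1, h2, e5, e7]

set_option maxHeartbeats 1000000 in
theorem stmt_8 {d : ℕ} (f₁ f₂ : EuclideanSpace ℝ (Fin d) → ℝ) (μ₁ L₁ μ₂ L₂ : ℝ)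
    (hf₁ : Differentiable ℝ f₁) (hf₂ : Differentiable ℝ f₂)
    (h₁ : μ₁ < L₁) (hL₂ : L₂ > μ₁) (hμ₁₂ : μ₁ ≥ μ₂) (hμ₂ : μ₂ ≥ 0)
    (hcL₁ : ConvexOn ℝ univ (fun x => L₁ / 2 * ‖x‖ ^ 2 - f₁ x))
    (hcμ₁ : ConvexOn ℝ univ (fun x => f₁ x - μ₁ / 2 * ‖x‖ ^ 2))
    (hcL₂ : ConvexOn ℝ univ (fun x => L₂ / 2 * ‖x‖ ^ 2 - f₂ x))
    (hcμ₂ : ConvexOn ℝ univ (fun x => f₂ x - μ₂ / 2 * ‖x‖ ^ 2))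
    (x₀ x₁ x₂ : EuclideanSpace ℝ (Fin d))
    (hDCA₀ : gradient f₁ x₁ = gradient f₂ x₀)
    (hDCA₁ : gradient f₁ x₂ = gradient f₂ x₁) :
    (f₁ x₀ - f₂ x₀) - (f₁ x₁ - f₂ x₁) ≥
      (μ₁ + μ₂ * (L₂ - μ₁) / (L₂ - μ₂)) * (1 / 2) * ‖x₀ - x₁‖ ^ 2 +
      μ₁ * (μ₁ - μ₂) / (L₂ - μ₂) * (1 / 2) * ‖x₁ - x₂‖ ^ 2 := by
  have hμ₁ : 0 ≤ μ₁ := le_trans hμ₂ hμ₁₂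
  have hL' : 0 < L₂ - μ₂ := by linarith
  set G0 := gradient f₂ x₀ with hG0
  set G1 := gradient f₂ x₁ with hG1
  set Δ := G1 - G0 with hΔdef
  -- strong convexity of f₁ between x₀ and x₁
  have A1 := my_strong_ineq hf₁ hcμ₁ x₀ x₁
  rw [hDCA₀] at A1
  -- gradient monotonicity of f₁ between x₁ and x₂
  have A2a := my_strong_ineq hf₁ hcμ₁ x₂ x₁
  have A2b := my_strong_ineq hf₁ hcμ₁ x₁ x₂
  rw [hDCA₀] at A2a
  rw [hDCA₁] at A2b
  have mono : μ₁ * ‖x₂ - x₁‖ ^ 2 ≤ ⟪Δ, x₂ - x₁⟫ := by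
    have e1 : ⟪G1, x₁ - x₂⟫ = -⟪G1, x₂ - x₁⟫ := by
      have : x₁ - x₂ = -(x₂ - x₁) := by abel
      rw [this, inner_neg_right]
    have e2 : ⟪Δ, x₂ - x₁⟫ = ⟪G1, x₂ - x₁⟫ - ⟪G0, x₂ - x₁⟫ := by
      rw [hΔdef, inner_sub_left]
    have e3 : ‖x₁ - x₂‖ = ‖x₂ - x₁‖ := norm_sub_rev _ _
    rw [e3] at A2b
    linarith [A2a, A2b, e1, e2]
  have hCS2 : ⟪Δ, x₂ - x₁⟫ ≤ ‖Δ‖ * ‖x₂ - x₁‖ := real_inner_le_norm _ _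
  have hΔt : μ₁ * ‖x₂ - x₁‖ ≤ ‖Δ‖ := by
    rcases eq_or_lt_of_le (norm_nonneg (x₂ - x₁)) with h | h
    · rw [← h, mul_zero]; exact norm_nonneg _
    · have : μ₁ * ‖x₂ - x₁‖ * ‖x₂ - x₁‖ ≤ ‖Δ‖ * ‖x₂ - x₁‖ := by
        nlinarith [mono, hCS2]
      exact le_of_mul_le_mul_right this h
  -- interpolation for f₂
  set h : EuclideanSpace ℝ (Fin d) → ℝ := fun p => f₂ p - μ₂ / 2 * ‖p‖ ^ 2 with hh
  have hdh : Differentiable ℝ h := hf₂.sub (my_diff_quad μ₂)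
  have hsm : ConvexOn ℝ univ (fun x => (L₂ - μ₂) / 2 * ‖x‖ ^ 2 - h x) := by
    convert hcL₂ using 1
    funext z; simp only [hh]; ring
  have Binterp := my_interp hdh hL' hcμ₂ hsm x₀ x₁
  have hgx0 : gradient h x₀ = G0 - μ₂ • x₀ := my_grad_sub_quad hf₂ μ₂ x₀
  have hgx1 : gradient h x₁ = G1 - μ₂ • x₁ := my_grad_sub_quad hf₂ μ₂ x₁
  set W := gradient h x₁ - gradient h x₀ with hWdef
  have hW : W = Δ + μ₂ • (x₀ - x₁) := by
    rw [hWdef, hgx0, hgx1, hΔdef, smul_sub]; abel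
  -- rewrite Binterp in terms of f₂
  have B' : f₂ x₀ + ⟪G0, x₁ - x₀⟫ + μ₂ / 2 * ‖x₀ - x₁‖ ^ 2
      + 1 / (2 * (L₂ - μ₂)) * ‖W‖ ^ 2 ≤ f₂ x₁ := by
    rw [hgx0, inner_sub_left, real_inner_smul_left] at Binterp
    have q1 : ⟪x₀, x₁ - x₀⟫ = ⟪x₀, x₁⟫ - ‖x₀‖ ^ 2 := by
      rw [inner_sub_right, real_inner_self_eq_norm_sq]
    have q2 : ‖x₀ - x₁‖ ^ 2 = ‖x₀‖ ^ 2 - 2 * ⟪x₀, x₁⟫ + ‖x₁‖ ^ 2 := norm_sub_sq_real x₀ x₁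
    have r1 : μ₂ * ⟪x₀, x₁ - x₀⟫ = μ₂ * ⟪x₀, x₁⟫ - μ₂ * ‖x₀‖ ^ 2 := by rw [q1]; ring
    have r2 : μ₂ / 2 * ‖x₀ - x₁‖ ^ 2
        = μ₂ / 2 * ‖x₀‖ ^ 2 - μ₂ * ⟪x₀, x₁⟫ + μ₂ / 2 * ‖x₁‖ ^ 2 := by rw [q2]; ring
    simp only [hh] at Binterp
    linarith [Binterp, r1, r2]
  have cancel : ⟪G0, x₁ - x₀⟫ = -⟪G0, x₀ - x₁⟫ := by
    have : x₁ - x₀ = -(x₀ - x₁) := by abel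
    rw [this, inner_neg_right]
  have hMain : μ₁ / 2 * ‖x₀ - x₁‖ ^ 2 + μ₂ / 2 * ‖x₀ - x₁‖ ^ 2
      + 1 / (2 * (L₂ - μ₂)) * ‖W‖ ^ 2 ≤ (f₁ x₀ - f₂ x₀) - (f₁ x₁ - f₂ x₁) := by
    linarith [A1, B', cancel]
  -- expansion of ‖W‖²
  have hE : ‖W‖ ^ 2 = ‖Δ‖ ^ 2 + 2 * μ₂ * ⟪Δ, x₀ - x₁⟫ + μ₂ ^ 2 * ‖x₀ - x₁‖ ^ 2 := by
    rw [hW, norm_add_sq_real, real_inner_smul_right, norm_smul, Real.norm_eq_abs,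
      abs_of_nonneg hμ₂, mul_pow]
    ring
  have hCS : -(‖Δ‖ * ‖x₀ - x₁‖) ≤ ⟪Δ, x₀ - x₁⟫ := by
    have := abs_real_inner_le_norm Δ (x₀ - x₁)
    have := neg_abs_le ⟪Δ, x₀ - x₁⟫
    linarith
  -- key scalar inequality
  have K : μ₁ * (μ₁ - μ₂) * ‖x₂ - x₁‖ ^ 2
      ≤ ‖Δ‖ ^ 2 + 2 * μ₂ * ⟪Δ, x₀ - x₁⟫ + μ₁ * μ₂ * ‖x₀ - x₁‖ ^ 2 := by
    rcases eq_or_lt_of_le hμ₁ with h0 | h0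
    · have hμ₂0 : μ₂ = 0 := le_antisymm (by linarith) hμ₂
      rw [← h0, hμ₂0]
      simp
    · have h9 : μ₁ ^ 2 * ‖x₂ - x₁‖ ^ 2 ≤ ‖Δ‖ ^ 2 := by
        nlinarith [hΔt, norm_nonneg Δ, norm_nonneg (x₂ - x₁), mul_nonneg hμ₁ (norm_nonneg (x₂ - x₁))]
      nlinarith [mul_nonneg hμ₂ (sq_nonneg (‖Δ‖ - μ₁ * ‖x₀ - x₁‖)),
        mul_nonneg (sub_nonneg.2 hμ₁₂) (sub_nonneg.2 h9),
        mul_nonneg (mul_nonneg hμ₁ hμ₂) (by linarith [hCS] : (0:ℝ) ≤ ⟪Δ, x₀ - x₁⟫ + ‖Δ‖ * ‖x₀ - x₁‖),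
        h0]
  -- final assembly
  have hT : ‖x₁ - x₂‖ = ‖x₂ - x₁‖ := norm_sub_rev _ _
  rw [ge_iff_le, hT]
  have hEq : μ₁ / 2 * ‖x₀ - x₁‖ ^ 2 + μ₂ / 2 * ‖x₀ - x₁‖ ^ 2 + 1 / (2 * (L₂ - μ₂)) * ‖W‖ ^ 2
      - ((μ₁ + μ₂ * (L₂ - μ₁) / (L₂ - μ₂)) * (1 / 2) * ‖x₀ - x₁‖ ^ 2
        + μ₁ * (μ₁ - μ₂) / (L₂ - μ₂) * (1 / 2) * ‖x₂ - x₁‖ ^ 2)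
      = (‖Δ‖ ^ 2 + 2 * μ₂ * ⟪Δ, x₀ - x₁⟫ + μ₁ * μ₂ * ‖x₀ - x₁‖ ^ 2
          - μ₁ * (μ₁ - μ₂) * ‖x₂ - x₁‖ ^ 2) / (2 * (L₂ - μ₂)) := by
    rw [hE]; field_simp; ring
  have hpos : 0 ≤ (‖Δ‖ ^ 2 + 2 * μ₂ * ⟪Δ, x₀ - x₁⟫ + μ₁ * μ₂ * ‖x₀ - x₁‖ ^ 2
      - μ₁ * (μ₁ - μ₂) * ‖x₂ - x₁‖ ^ 2) / (2 * (L₂ - μ₂)) :=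
    div_nonneg (by linarith [K]) (by linarith)
  linarith [hMain, hEq, hpos]
end

section
/- Let f₁, f₂ : ℝ^d → ℝ be differentiable with curvatures in [μ₁, L₁] and [μ₂, L₂] respectively, where 0 < L₂ ≤ μ₁ < L₁, μ₂ ∈ [−L₂μ₁/(L₂+μ₁), L₂), μ₁ + μ₂ > 0. Let x₀, x₁, x₂ satisfy ∇f₁(x₁) = ∇f₂(x₀) and ∇f₁(x₂) = ∇f₂(x₁). Then F(x₀) − F(x₁) ≥ (μ₁²(L₂+μ₁)/L₂²)·(1/2)‖x₁ − x₂‖², where F = f₁ − f₂. -/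
open Set

local notation "⟪" x ", " y "⟫" => @inner ℝ _ _ x y

variable {E : Type*} [NormedAddCommGroup E] [InnerProductSpace ℝ E] [CompleteSpace E]

lemma sc_grad_ineq {f : E → ℝ} (hf : Differentiable ℝ f) {c : ℝ}
    (hc : ConvexOn ℝ univ (fun z => f z - c / 2 * ‖z‖ ^ 2)) (x y : E) :
    f x + ⟪gradient f x, y - x⟫ + c / 2 * ‖y - x‖ ^ 2 ≤ f y := by
  set v := y - x with hv
  set φ : ℝ → E := fun t => t • v + x with hφ
  have hline : HasDerivAt φ v 0 := by
    exact (((hasDerivAt_id (0 : ℝ)).smul_const v).add_const x).congr_deriv (one_smul ℝ v)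
  have hφ0 : φ 0 = x := by simp [hφ]
  have hφ1 : φ 1 = y := by simp [hφ, hv]
  have hconv : ConvexOn ℝ univ (fun t : ℝ => f (φ t) - c / 2 * ‖φ t‖ ^ 2) := by
    have h := hc.comp_affineMap (AffineMap.lineMap (x : E) (y : E) : ℝ →ᵃ[ℝ] E)
    have heq : ((fun z => f z - c / 2 * ‖z‖ ^ 2) ∘ (AffineMap.lineMap (x : E) (y : E) : ℝ →ᵃ[ℝ] E))
        = fun t : ℝ => f (φ t) - c / 2 * ‖φ t‖ ^ 2 := by
      funext t
      simp [Function.comp, AffineMap.lineMap_apply, hφ, hv, vsub_eq_sub, vadd_eq_add]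
    rw [heq] at h
    simpa using h
  have hnorm : ∀ t : ℝ, ‖φ t‖ ^ 2 = ‖v‖ ^ 2 * t ^ 2 + 2 * ⟪v, x⟫ * t + ‖x‖ ^ 2 := by
    intro t
    have h := norm_add_sq_real (t • v) x
    rw [norm_smul] at h
    simp only [Real.norm_eq_abs] at h
    rw [real_inner_smul_left] at h
    calc ‖φ t‖ ^ 2 = (|t| * ‖v‖) ^ 2 + 2 * (t * ⟪v, x⟫) + ‖x‖ ^ 2 := h
    _ = ‖v‖ ^ 2 * t ^ 2 + 2 * ⟪v, x⟫ * t + ‖x‖ ^ 2 := by rw [mul_pow, sq_abs]; ring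
  have hq : HasDerivAt (fun t : ℝ => c / 2 * ‖φ t‖ ^ 2) (c * ⟪v, x⟫) 0 := by
    have ha : HasDerivAt (fun t : ℝ => ‖v‖ ^ 2 * t ^ 2) (0 : ℝ) 0 := by
      have := (hasDerivAt_pow 2 (0 : ℝ)).const_mul (‖v‖ ^ 2)
      simpa using this.congr_deriv (by norm_num)
    have hb : HasDerivAt (fun t : ℝ => 2 * ⟪v, x⟫ * t) (2 * ⟪v, x⟫) 0 := by
      simpa using (hasDerivAt_id (0 : ℝ)).const_mul (2 * ⟪v, x⟫)
    have h1 : HasDerivAt (fun t : ℝ => ‖v‖ ^ 2 * t ^ 2 + 2 * ⟪v, x⟫ * t + ‖x‖ ^ 2)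
        (2 * ⟪v, x⟫) 0 := by
      simpa using (ha.add hb).add_const (‖x‖ ^ 2)
    have hfun : (fun t : ℝ => c / 2 * ‖φ t‖ ^ 2)
        = fun t : ℝ => c / 2 * (‖v‖ ^ 2 * t ^ 2 + 2 * ⟪v, x⟫ * t + ‖x‖ ^ 2) := by
      funext t; rw [hnorm t]
    rw [hfun]
    exact (h1.const_mul (c / 2)).congr_deriv (by ring)
  have hfd : HasDerivAt (fun t : ℝ => f (φ t)) ⟪gradient f x, v⟫ 0 := by
    have hg : HasFDerivAt f ((InnerProductSpace.toDual ℝ E) (gradient f x)) (φ 0) := by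
      rw [hφ0]; exact (hf x).hasGradientAt.hasFDerivAt
    have := hg.comp_hasDerivAt (0 : ℝ) hline
    simpa [InnerProductSpace.toDual_apply_apply, Function.comp_def] using this
  have hder : HasDerivAt (fun t : ℝ => f (φ t) - c / 2 * ‖φ t‖ ^ 2)
      (⟪gradient f x, v⟫ - c * ⟪v, x⟫) 0 := hfd.sub hq
  have hslope := hconv.le_slope_of_hasDerivAt (mem_univ (0:ℝ)) (mem_univ (1:ℝ)) one_pos hder
  rw [slope_def_field] at hslope
  rw [hφ0, hφ1] at hslope
  have hid : ‖y‖ ^ 2 = ‖x‖ ^ 2 + 2 * ⟪x, v⟫ + ‖v‖ ^ 2 := by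
    have h := norm_add_sq_real x v
    have : x + v = y := by rw [hv]; abel
    rw [this] at h
    exact h
  have hcomm : c * ⟪x, v⟫ = c * ⟪v, x⟫ := by rw [real_inner_comm]
  have hslope' : ⟪gradient f x, v⟫ - c * ⟪v, x⟫ ≤
      (f y - c / 2 * ‖y‖ ^ 2 - (f x - c / 2 * ‖x‖ ^ 2)) / (1 - 0) := hslope
  rw [show ((1:ℝ) - 0) = 1 by norm_num, div_one] at hslope'
  have hid' : c / 2 * ‖y‖ ^ 2 = c / 2 * ‖x‖ ^ 2 + c * ⟪x, v⟫ + c / 2 * ‖v‖ ^ 2 := by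
    rw [hid]; ring
  linarith [hslope', hid', hcomm]

lemma smooth_grad_ineq {f : E → ℝ} (hf : Differentiable ℝ f) {c : ℝ}
    (hc : ConvexOn ℝ univ (fun z => c / 2 * ‖z‖ ^ 2 - f z)) (x y : E) :
    f y ≤ f x + ⟪gradient f x, y - x⟫ + c / 2 * ‖y - x‖ ^ 2 := by
  have hneg : Differentiable ℝ (fun z => -f z) := hf.neg
  have hc' : ConvexOn ℝ univ (fun z => (fun w => -f w) z - (-c) / 2 * ‖z‖ ^ 2) := by
    have heq : (fun z => (fun w => -f w) z - (-c) / 2 * ‖z‖ ^ 2)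
        = (fun z => c / 2 * ‖z‖ ^ 2 - f z) := by
      funext z; ring
    rw [heq]; exact hc
  have key := sc_grad_ineq hneg hc' x y
  have hgradneg : gradient (fun z => -f z) x = -gradient f x := by
    have h := (hf x).hasGradientAt
    have h2 : HasGradientAt (fun z => -f z) (-gradient f x) x := by
      rw [hasGradientAt_iff_hasFDerivAt] at h ⊢
      rw [map_neg]
      exact h.neg
    exact h2.gradient
  rw [hgradneg, inner_neg_left] at key
  linarith [key]

lemma interp_ineq {f : E → ℝ} (hf : Differentiable ℝ f) {m L : ℝ} (hmL : m < L)
    (hcm : ConvexOn ℝ univ (fun z => f z - m / 2 * ‖z‖ ^ 2))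
    (hcL : ConvexOn ℝ univ (fun z => L / 2 * ‖z‖ ^ 2 - f z)) (a b : E) :
    ‖gradient f a - gradient f b - m • (a - b)‖ ^ 2 ≤
      2 * (L - m) * (f b - f a - ⟪gradient f a, b - a⟫ - m / 2 * ‖b - a‖ ^ 2) := by
  have hLm : 0 < L - m := sub_pos.2 hmL
  set Ga := gradient f a with hGa
  set Gb := gradient f b with hGb
  set u := Ga - Gb - m • (a - b) with hu
  set k := (L - m)⁻¹ with hk
  have hk1 : (L - m) * k = 1 := by rw [hk]; exact mul_inv_cancel₀ (by linarith)
  set z := b + k • u with hz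
  have hA := sc_grad_ineq hf hcm a z
  have hB := smooth_grad_ineq hf hcL b z
  have hzb : z - b = k • u := by rw [hz]; abel
  have hza : z - a = (b - a) + k • u := by rw [hz]; abel
  have h1 : ⟪Ga, z - a⟫ = ⟪Ga, b - a⟫ + k * ⟪Ga, u⟫ := by
    rw [hza, inner_add_right, real_inner_smul_right]
  have h2 : ‖z - a‖ ^ 2 = ‖b - a‖ ^ 2 + 2 * (k * ⟪b - a, u⟫) + k ^ 2 * ‖u‖ ^ 2 := by
    rw [hza, norm_add_sq_real, real_inner_smul_right, norm_smul, mul_pow, Real.norm_eq_abs, sq_abs]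
  have h3 : ⟪Gb, z - b⟫ = k * ⟪Gb, u⟫ := by rw [hzb, real_inner_smul_right]
  have h4 : ‖z - b‖ ^ 2 = k ^ 2 * ‖u‖ ^ 2 := by
    rw [hzb, norm_smul, mul_pow, Real.norm_eq_abs, sq_abs]
  have h5 : ⟪Ga, u⟫ - ⟪Gb, u⟫ = ‖u‖ ^ 2 - m * ⟪b - a, u⟫ := by
    have hab : Ga - Gb = u + m • (a - b) := by rw [hu]; abel
    have habm : (m : ℝ) • (a - b) = -(m • (b - a)) := by
      rw [← smul_neg]; congr 1; abel
    calc ⟪Ga, u⟫ - ⟪Gb, u⟫ = ⟪Ga - Gb, u⟫ := by rw [inner_sub_left]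
      _ = ⟪u, u⟫ + ⟪m • (a - b), u⟫ := by rw [hab, inner_add_left]
      _ = ‖u‖ ^ 2 - m * ⟪b - a, u⟫ := by
          rw [real_inner_self_eq_norm_sq, habm, inner_neg_left, real_inner_smul_left]; ring
  rw [h1, h2] at hA
  rw [h3, h4] at hB
  -- combine: f b - f a - ⟪Ga, b-a⟫ - m/2‖b-a‖² ≥ k‖u‖² - (L-m)/2 k²‖u‖² = k‖u‖²/2
  have hcomb : f a + ⟪Ga, b - a⟫ + m / 2 * ‖b - a‖ ^ 2 + k * ⟪Ga, u⟫
      + m / 2 * (2 * (k * ⟪b - a, u⟫) + k ^ 2 * ‖u‖ ^ 2)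
      ≤ f b + k * ⟪Gb, u⟫ + L / 2 * (k ^ 2 * ‖u‖ ^ 2) := by nlinarith [hA, hB]
  have h5k : k * ⟪Ga, u⟫ - k * ⟪Gb, u⟫ = k * ‖u‖ ^ 2 - k * (m * ⟪b - a, u⟫) := by
    rw [← mul_sub, h5]; ring
  -- so: f b - f a - ⟪Ga,b-a⟫ - m/2‖b-a‖² ≥ k‖u‖² - (L-m)/2*k²‖u‖²
  have hstep : f b - f a - ⟪Ga, b - a⟫ - m / 2 * ‖b - a‖ ^ 2
      ≥ k * ‖u‖ ^ 2 - (L - m) / 2 * (k ^ 2 * ‖u‖ ^ 2) := by linarith [hcomb, h5k]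
  have hmul := mul_le_mul_of_nonneg_left hstep.le (by linarith : (0:ℝ) ≤ 2 * (L - m))
  have e1 : 2 * (L - m) * (k * ‖u‖ ^ 2) = 2 * ‖u‖ ^ 2 := by
    rw [show 2 * (L - m) * (k * ‖u‖ ^ 2) = 2 * ((L - m) * k) * ‖u‖ ^ 2 by ring, hk1]; ring
  have e2 : 2 * (L - m) * ((L - m) / 2 * (k ^ 2 * ‖u‖ ^ 2)) = ‖u‖ ^ 2 := by
    rw [show 2 * (L - m) * ((L - m) / 2 * (k ^ 2 * ‖u‖ ^ 2))
      = ((L - m) * k) * ((L - m) * k) * ‖u‖ ^ 2 by ring, hk1]; ring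
  linarith [hmul, e1, e2]




lemma descent_case_nonneg (a b m A q s t : ℝ) (ha : 0 < a) (hba : a ≤ b) (hm0 : 0 ≤ m)
    (hB2 : q + m * t ^ 2 + (b - a) / 2 * t ^ 2 ≤ A)
    (hqs : s ^ 2 - m ^ 2 * t ^ 2 ≤ (a + m) * q)
    (hst : s ^ 2 ≤ a ^ 2 * t ^ 2) :
    (a + b) * s ^ 2 ≤ 2 * a ^ 2 * A := by
  have hC : 0 ≤ a * m + a * b + b * m - a ^ 2 := by nlinarith
  have hB2' := mul_le_mul_of_nonneg_left hB2 (by positivity : (0:ℝ) ≤ 2 * a ^ 2 * (a + m))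
  have hqs' := mul_le_mul_of_nonneg_left hqs (by positivity : (0:ℝ) ≤ 2 * a ^ 2)
  have hCt := mul_le_mul_of_nonneg_left hst hC
  have hfin : (a + m) * ((a + b) * s ^ 2) ≤ (a + m) * (2 * a ^ 2 * A) := by linarith
  exact le_of_mul_le_mul_left hfin (by linarith)

lemma descent_case_neg (a b m A n q s t : ℝ) (ha : 0 < a) (hba : a ≤ b) (hma : 0 < a - m)
    (hD : 0 ≤ (a + b) * (a + m) - a ^ 2)
    (hB1 : (a - m) * (b + m) * t ^ 2 + n ^ 2 ≤ 2 * (a - m) * A)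
    (hs2n : (a - m) * s ^ 2 ≤ (a + m) * n ^ 2 + (a - m) * m ^ 2 * t ^ 2)
    (hnt2 : n ^ 2 ≤ (a - m) ^ 2 * t ^ 2) :
    (a + b) * s ^ 2 ≤ 2 * a ^ 2 * A := by
  have hprod : 0 ≤ ((a + b) * (a + m) - a ^ 2) * ((a - m) ^ 2 * t ^ 2 - n ^ 2) :=
    mul_nonneg hD (by linarith)
  have hB1' := mul_le_mul_of_nonneg_left hB1 (by positivity : (0:ℝ) ≤ a ^ 2)
  have hs2n' := mul_le_mul_of_nonneg_left hs2n (by linarith : (0:ℝ) ≤ a + b)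
  have hfin : (a - m) * ((a + b) * s ^ 2) ≤ (a - m) * (2 * a ^ 2 * A) := by linarith
  exact le_of_mul_le_mul_left hfin hma

lemma s_sq_bound_nonneg (a m n q s t : ℝ) (hm0 : 0 ≤ m)
    (hF7 : s ^ 2 = n ^ 2 + 2 * m * q + m ^ 2 * t ^ 2) (hF8 : q ≤ n * t)
    (hnt : n ≤ (a - m) * t) (hn : 0 ≤ n) (ht : 0 ≤ t) : s ^ 2 ≤ a ^ 2 * t ^ 2 := by
  have h1 : 2 * m * q ≤ 2 * m * (n * t) := mul_le_mul_of_nonneg_left hF8 (by linarith)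
  have h3 : n * t ≤ (a - m) * t * t := mul_le_mul_of_nonneg_right hnt ht
  nlinarith [h1, h3, hnt]

lemma s_sq_bound_neg (a m n q s t : ℝ) (hm0 : m < 0)
    (hq : n ^ 2 ≤ (a - m) * q)
    (hF7 : s ^ 2 = n ^ 2 + 2 * m * q + m ^ 2 * t ^ 2) :
    (a - m) * s ^ 2 ≤ (a + m) * n ^ 2 + (a - m) * m ^ 2 * t ^ 2 := by
  have h1 : 2 * m * ((a - m) * q) ≤ 2 * m * n ^ 2 :=
    mul_le_mul_of_nonpos_left hq (by linarith)
  have h2 : (a - m) * s ^ 2 = (a - m) * (n ^ 2 + 2 * m * q + m ^ 2 * t ^ 2) := by rw [hF7]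
  linarith [h1, h2]

set_option maxHeartbeats 2000000 in
theorem stmt_11 {d : ℕ} (f₁ f₂ : EuclideanSpace ℝ (Fin d) → ℝ) (μ₁ L₁ μ₂ L₂ : ℝ)
    (hf₁ : Differentiable ℝ f₁) (hf₂ : Differentiable ℝ f₂)
    (hL₂pos : 0 < L₂) (hL₂μ₁ : L₂ ≤ μ₁) (h₁ : μ₁ < L₁)
    (hμ₂ : μ₂ ∈ Set.Ico (-L₂ * μ₁ / (L₂ + μ₁)) L₂)
    (hsum : μ₁ + μ₂ > 0)
    (hcL₁ : ConvexOn ℝ univ (fun x => L₁ / 2 * ‖x‖ ^ 2 - f₁ x))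
    (hcμ₁ : ConvexOn ℝ univ (fun x => f₁ x - μ₁ / 2 * ‖x‖ ^ 2))
    (hcL₂ : ConvexOn ℝ univ (fun x => L₂ / 2 * ‖x‖ ^ 2 - f₂ x))
    (hcμ₂ : ConvexOn ℝ univ (fun x => f₂ x - μ₂ / 2 * ‖x‖ ^ 2))
    (x₀ x₁ x₂ : EuclideanSpace ℝ (Fin d))
    (hDCA₀ : gradient f₁ x₁ = gradient f₂ x₀)
    (hDCA₁ : gradient f₁ x₂ = gradient f₂ x₁) :
    (f₁ x₀ - f₂ x₀) - (f₁ x₁ - f₂ x₁) ≥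
      μ₁ ^ 2 * (L₂ + μ₁) / L₂ ^ 2 * (1 / 2) * ‖x₁ - x₂‖ ^ 2 := by
  obtain ⟨hm_lb, hmL⟩ := hμ₂
  have hb : 0 < μ₁ := lt_of_lt_of_le hL₂pos hL₂μ₁
  have hLm : 0 < L₂ - μ₂ := sub_pos.2 hmL
  set G := gradient f₁ x₁ with hG
  set H := gradient f₁ x₂ with hH
  have hG₂₀ : gradient f₂ x₀ = G := hDCA₀.symm
  have hG₂₁ : gradient f₂ x₁ = H := hDCA₁.symm
  set v := x₀ - x₁ with hv
  set w := x₁ - x₂ with hw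
  set gg := G - H with hgg
  set u := gg - μ₂ • v with hu
  -- F1 : strong convexity of f₁ between x₁ and x₀
  have F1 : f₁ x₁ + ⟪G, v⟫ + μ₁ / 2 * ‖v‖ ^ 2 ≤ f₁ x₀ := by
    have h := sc_grad_ineq hf₁ hcμ₁ x₁ x₀
    rwa [← hG, ← hv] at h
  -- F2 : smoothness of f₂ between x₁ and x₀
  have F2 : f₂ x₀ ≤ f₂ x₁ + ⟪H, v⟫ + L₂ / 2 * ‖v‖ ^ 2 := by
    have h := smooth_grad_ineq hf₂ hcL₂ x₁ x₀
    rwa [hG₂₁, ← hv] at h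
  -- F5 : strong monotonicity of ∇f₁ between x₁, x₂
  have F5 : μ₁ * ‖w‖ ^ 2 ≤ ⟪gg, w⟫ := by
    have h1 := sc_grad_ineq hf₁ hcμ₁ x₁ x₂
    have h2 := sc_grad_ineq hf₁ hcμ₁ x₂ x₁
    rw [← hG] at h1
    rw [← hH, ← hw] at h2
    have hx21 : x₂ - x₁ = -w := by rw [hw]; abel
    rw [hx21, inner_neg_right, norm_neg] at h1
    have hginner : ⟪gg, w⟫ = ⟪G, w⟫ - ⟪H, w⟫ := by rw [hgg, inner_sub_left]
    linarith [h1, h2, hginner]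
  -- interpolation inequalities for f₂
  have F3 : ‖u‖ ^ 2 ≤ 2 * (L₂ - μ₂) * (f₂ x₁ - f₂ x₀ + ⟪G, v⟫ - μ₂ / 2 * ‖v‖ ^ 2) := by
    have h := interp_ineq hf₂ hmL hcμ₂ hcL₂ x₀ x₁
    rw [hG₂₀, hG₂₁, ← hv] at h
    have hvec : G - H - μ₂ • v = u := by rw [hu, hgg]
    have hx10 : x₁ - x₀ = -v := by rw [hv]; abel
    rw [hvec, hx10, inner_neg_right, norm_neg] at h
    calc ‖u‖ ^ 2 ≤ 2 * (L₂ - μ₂) * (f₂ x₁ - f₂ x₀ - -⟪G, v⟫ - μ₂ / 2 * ‖v‖ ^ 2) := h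
      _ = 2 * (L₂ - μ₂) * (f₂ x₁ - f₂ x₀ + ⟪G, v⟫ - μ₂ / 2 * ‖v‖ ^ 2) := by ring
  have F4 : ‖u‖ ^ 2 ≤ 2 * (L₂ - μ₂) * (f₂ x₀ - f₂ x₁ - ⟪H, v⟫ - μ₂ / 2 * ‖v‖ ^ 2) := by
    have h := interp_ineq hf₂ hmL hcμ₂ hcL₂ x₁ x₀
    rw [hG₂₀, hG₂₁, ← hv] at h
    have hx10 : x₁ - x₀ = -v := by rw [hv]; abel
    have hvec : H - G - μ₂ • (x₁ - x₀) = -u := by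
      rw [hx10, hu, hgg, smul_neg]; abel
    rw [hvec, norm_neg] at h
    exact h
  -- relation ⟪gg, v⟫ = ⟪u,v⟫ + μ₂‖v‖²
  have hgv : ⟪G, v⟫ - ⟪H, v⟫ = ⟪u, v⟫ + μ₂ * ‖v‖ ^ 2 := by
    have h1 : ⟪gg, v⟫ = ⟪G, v⟫ - ⟪H, v⟫ := by rw [hgg, inner_sub_left]
    have h2 : ⟪gg, v⟫ = ⟪u, v⟫ + μ₂ * ‖v‖ ^ 2 := by
      have : gg = u + μ₂ • v := by rw [hu]; abel
      rw [this, inner_add_left, real_inner_smul_left, real_inner_self_eq_norm_sq]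
    linarith [h1, h2]
  -- co-coercivity : ‖u‖² ≤ (L₂-μ₂) ⟪u,v⟫
  have hq : ‖u‖ ^ 2 ≤ (L₂ - μ₂) * ⟪u, v⟫ := by
    have key : 2 * (L₂ - μ₂) * (f₂ x₁ - f₂ x₀ + ⟪G, v⟫ - μ₂ / 2 * ‖v‖ ^ 2)
        + 2 * (L₂ - μ₂) * (f₂ x₀ - f₂ x₁ - ⟪H, v⟫ - μ₂ / 2 * ‖v‖ ^ 2)
        = 2 * ((L₂ - μ₂) * ⟪u, v⟫) := by
      have : ⟪G, v⟫ - ⟪H, v⟫ - μ₂ * ‖v‖ ^ 2 = ⟪u, v⟫ := by linarith [hgv]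
      rw [← this]; ring
    linarith [F3, F4, key]
  have F7 : ‖gg‖ ^ 2 = ‖u‖ ^ 2 + 2 * μ₂ * ⟪u, v⟫ + μ₂ ^ 2 * ‖v‖ ^ 2 := by
    have hggu : gg = u + μ₂ • v := by rw [hu]; abel
    rw [hggu, norm_add_sq_real, real_inner_smul_right, norm_smul, mul_pow,
      Real.norm_eq_abs, sq_abs]
    ring
  have F8 : ⟪u, v⟫ ≤ ‖u‖ * ‖v‖ := real_inner_le_norm u v
  have F6 : ⟪gg, w⟫ ≤ ‖gg‖ * ‖w‖ := real_inner_le_norm gg w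
  have hsr : μ₁ * ‖w‖ ≤ ‖gg‖ := by
    rcases eq_or_lt_of_le (norm_nonneg w) with h0 | h0
    · rw [← h0]; simp [norm_nonneg]
    · have hch : μ₁ * ‖w‖ * ‖w‖ ≤ ‖gg‖ * ‖w‖ := by
        calc μ₁ * ‖w‖ * ‖w‖ = μ₁ * ‖w‖ ^ 2 := by ring
          _ ≤ ⟪gg, w⟫ := F5
          _ ≤ ‖gg‖ * ‖w‖ := F6
      exact le_of_mul_le_mul_right hch h0
  have hnt : ‖u‖ ≤ (L₂ - μ₂) * ‖v‖ := by
    rcases eq_or_lt_of_le (norm_nonneg u) with h0 | h0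
    · rw [← h0]; positivity
    · have hch : ‖u‖ * ‖u‖ ≤ (L₂ - μ₂) * ‖v‖ * ‖u‖ := by
        calc ‖u‖ * ‖u‖ = ‖u‖ ^ 2 := by ring
          _ ≤ (L₂ - μ₂) * ⟪u, v⟫ := hq
          _ ≤ (L₂ - μ₂) * (‖u‖ * ‖v‖) :=
              mul_le_mul_of_nonneg_left F8 (by linarith)
          _ = (L₂ - μ₂) * ‖v‖ * ‖u‖ := by ring
      exact le_of_mul_le_mul_right hch h0
  -- the two master descent bounds
  have B1 : (L₂ - μ₂) * (μ₁ + μ₂) * ‖v‖ ^ 2 + ‖u‖ ^ 2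
      ≤ 2 * (L₂ - μ₂) * ((f₁ x₀ - f₂ x₀) - (f₁ x₁ - f₂ x₁)) := by
    have F1' := mul_le_mul_of_nonneg_left F1 (by linarith : (0:ℝ) ≤ 2 * (L₂ - μ₂))
    nlinarith [F3, F1']
  have B2 : ⟪u, v⟫ + μ₂ * ‖v‖ ^ 2 + (μ₁ - L₂) / 2 * ‖v‖ ^ 2
      ≤ (f₁ x₀ - f₂ x₀) - (f₁ x₁ - f₂ x₁) := by linarith [F1, F2, hgv]
  -- main inequality : (L₂+μ₁)‖gg‖² ≤ 2L₂²·descent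
  have hKey : (L₂ + μ₁) * ‖gg‖ ^ 2
      ≤ 2 * L₂ ^ 2 * ((f₁ x₀ - f₂ x₀) - (f₁ x₁ - f₂ x₁)) := by
    rcases le_or_gt 0 μ₂ with hm0 | hm0
    · -- μ₂ ≥ 0
      have hs2t2 : ‖gg‖ ^ 2 ≤ L₂ ^ 2 * ‖v‖ ^ 2 :=
        s_sq_bound_nonneg L₂ μ₂ ‖u‖ ⟪u, v⟫ ‖gg‖ ‖v‖ hm0 F7 F8 hnt
          (norm_nonneg u) (norm_nonneg v)
      have hqs : ‖gg‖ ^ 2 - μ₂ ^ 2 * ‖v‖ ^ 2 ≤ (L₂ + μ₂) * ⟪u, v⟫ := by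
        nlinarith [F7, hq]
      exact descent_case_nonneg L₂ μ₁ μ₂ _ ⟪u, v⟫ ‖gg‖ ‖v‖ hL₂pos hL₂μ₁ hm0 B2 hqs hs2t2
    · -- μ₂ < 0
      have hab : (0:ℝ) < L₂ + μ₁ := by linarith
      have hmlb' : -L₂ * μ₁ ≤ μ₂ * (L₂ + μ₁) := by
        rw [div_le_iff₀ hab] at hm_lb; linarith [hm_lb]
      have hD : 0 ≤ (L₂ + μ₁) * (L₂ + μ₂) - L₂ ^ 2 := by nlinarith [hmlb']
      have hs2n : (L₂ - μ₂) * ‖gg‖ ^ 2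
          ≤ (L₂ + μ₂) * ‖u‖ ^ 2 + (L₂ - μ₂) * μ₂ ^ 2 * ‖v‖ ^ 2 :=
        s_sq_bound_neg L₂ μ₂ ‖u‖ ⟪u, v⟫ ‖gg‖ ‖v‖ hm0 hq F7
      have hnt2 : ‖u‖ ^ 2 ≤ (L₂ - μ₂) ^ 2 * ‖v‖ ^ 2 := by
        nlinarith [hnt, norm_nonneg u, norm_nonneg v]
      have hB1 : (L₂ - μ₂) * (μ₁ + μ₂) * ‖v‖ ^ 2 + ‖u‖ ^ 2
          ≤ 2 * (L₂ - μ₂) * ((f₁ x₀ - f₂ x₀) - (f₁ x₁ - f₂ x₁)) := B1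
      have hB1'' : (L₂ - μ₂) * (μ₁ + μ₂) * ‖v‖ ^ 2 + ‖u‖ ^ 2
          ≤ 2 * (L₂ - μ₂) * ((f₁ x₀ - f₂ x₀) - (f₁ x₁ - f₂ x₁)) := hB1
      exact descent_case_neg L₂ μ₁ μ₂ _ ‖u‖ ⟪u, v⟫ ‖gg‖ ‖v‖ hL₂pos hL₂μ₁ hLm hD hB1'' hs2n hnt2
  -- conclude
  have hs2 : μ₁ ^ 2 * ‖w‖ ^ 2 ≤ ‖gg‖ ^ 2 := by
    nlinarith [hsr, norm_nonneg w, hb]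
  rw [ge_iff_le, show μ₁ ^ 2 * (L₂ + μ₁) / L₂ ^ 2 * (1 / 2) * ‖x₁ - x₂‖ ^ 2
      = (L₂ + μ₁) * (μ₁ ^ 2 * ‖x₁ - x₂‖ ^ 2) / (2 * L₂ ^ 2) by ring,
    div_le_iff₀ (by positivity)]
  have hws : ‖x₁ - x₂‖ = ‖w‖ := by rw [hw]
  rw [hws]
  have hmul : (L₂ + μ₁) * (μ₁ ^ 2 * ‖w‖ ^ 2) ≤ (L₂ + μ₁) * ‖gg‖ ^ 2 :=
    mul_le_mul_of_nonneg_left hs2 (by linarith)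
  linarith [hKey, hmul]
end
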